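/- Let S be a permutative semigroup and X a nonempty subset of S with Sep(X) nonempty. Then X is a medial subset of S, i.e., for all u,v,x,y ∈ S, uxyv ∈ X iff uyxv ∈ X. -/

import Mathlib

/-- The product `a * l₁ * l₂ * ⋯ * lₘ` of an element and a list in a semigroup. -/
def pProd {S : Type*} [Semigroup S] (a : S) (l : List S) : S :=
  l.foldl (· * ·) a

/-- `S` satisfies the nontrivial permutation identity given by `σ` (on `n ≥ 2` letters). -/
def PermIdentity {S : Type*} [Semigroup S] (n : ℕ) (hn : 2 ≤ n)
    (σ : Equiv.Perm (Fin n)) : Prop :=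
  ∀ x : Fin n → S,
    pProd (x ⟨0, by omega⟩) (List.ofFn x).tail
      = pProd (x (σ ⟨0, by omega⟩)) (List.ofFn (x ∘ σ)).tail

/-- The separator of a subset `A` of a semigroup `S`. -/
def Separator {S : Type*} [Semigroup S] (A : Set S) : Set S :=
  {x | (∀ a ∈ A, x * a ∈ A) ∧ (∀ a ∈ A, a * x ∈ A) ∧
       (∀ a ∉ A, x * a ∉ A) ∧ (∀ a ∉ A, a * x ∉ A)}

namespace PermSepAux

variable {S : Type*} [Semigroup S]

/-- `padL t k w = t^k * w` (with `padL t 0 w = w`). -/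
def padL (t : S) : ℕ → S → S
  | 0, w => w
  | k+1, w => t * padL t k w

/-- `padR t k w = w * t^k` (with `padR t 0 w = w`). -/
def padR (t : S) : ℕ → S → S
  | 0, w => w
  | k+1, w => padR t k w * t

lemma padL_mul (t : S) (k : ℕ) (w z : S) : padL t k w * z = padL t k (w * z) := by
  induction k with
  | zero => rfl
  | succ k ih => simp only [padL, mul_assoc, ih]

lemma mul_padR (t : S) (k : ℕ) (z w : S) : z * padR t k w = padR t k (z * w) := by
  induction k with
  | zero => rfl
  | succ k ih => simp only [padR, ← mul_assoc, ih]

lemma padL_t (t : S) (k : ℕ) (z : S) : padL t k (t * z) = t * padL t k z := by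
  induction k with
  | zero => rfl
  | succ k ih => simp only [padL, ih]

lemma padR_mul (t : S) (k : ℕ) (w z : S) : padR t k w * z = w * padL t k z := by
  induction k generalizing z with
  | zero => rfl
  | succ k ih =>
      show padR t k w * t * z = w * padL t (k+1) z
      rw [mul_assoc, ih (t * z), padL_t]
      rfl

lemma padL_add (t : S) (j k : ℕ) (w : S) : padL t j (padL t k w) = padL t (j + k) w := by
  induction j with
  | zero => simp [padL, Nat.zero_add]
  | succ j ih =>
      show t * padL t j (padL t k w) = padL t (j + 1 + k) w
      rw [ih]
      have : j + 1 + k = (j + k) + 1 := by omega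
      rw [this]
      rfl

lemma padL_padR (t : S) (j k : ℕ) (w : S) :
    padL t j (padR t k w) = padR t k (padL t j w) := by
  induction j with
  | zero => rfl
  | succ j ih =>
      show t * padL t j (padR t k w) = padR t k (t * padL t j w)
      rw [ih, mul_padR]

lemma mul_padR_self (t : S) (j : ℕ) (z : S) : z * padR t j t = padR t (j+1) z := by
  induction j with
  | zero => rfl
  | succ j ih =>
      show z * (padR t j t * t) = padR t (j+1) z * t
      rw [← mul_assoc, ih]

/-- Product of a list, with junk value `t` on the empty list. -/
def F (t : S) : List S → S
  | [] => t
  | a :: l => pProd a l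

lemma foldl_mul (l : List S) : ∀ a b : S,
    l.foldl (· * ·) (a * b) = a * l.foldl (· * ·) b := by
  induction l with
  | nil => intro a b; rfl
  | cons c r ih =>
      intro a b
      simp only [List.foldl_cons]
      rw [mul_assoc, ih]

lemma F_cons (t a b : S) (l : List S) : F t (a :: b :: l) = a * F t (b :: l) := by
  show pProd a (b :: l) = a * pProd b l
  simp only [pProd, List.foldl_cons]
  exact foldl_mul l a b

lemma F_cons' (t a : S) (l : List S) (h : l ≠ []) : F t (a :: l) = a * F t l := by
  cases l with
  | nil => exact absurd rfl h
  | cons b r => exact F_cons t a b r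

lemma F_allt (t : S) : ∀ (m : ℕ), 0 < m →
    F t (List.ofFn (fun _ : Fin m => t)) = padR t (m - 1) t := by
  intro m
  induction m with
  | zero => intro h; omega
  | succ mm ih =>
      intro _
      rw [List.ofFn_succ]
      by_cases hmm : mm = 0
      · subst hmm
        simp [F, pProd, padR]
      · rw [F_cons' t t _ (by simp [List.ofFn_eq_nil_iff]; omega)]
        rw [ih (by omega)]
        rw [mul_padR_self]
        have : mm - 1 + 1 = mm := by omega
        rw [this]
        rfl

lemma F_one (t Y : S) : ∀ (m p : ℕ) (g : Fin m → S), p < m →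
    (∀ j : Fin m, (j : ℕ) = p → g j = Y) →
    (∀ j : Fin m, (j : ℕ) ≠ p → g j = t) →
    F t (List.ofFn g) = padR t (m - 1 - p) (padL t p Y) := by
  intro m
  induction m with
  | zero => intro p g hp; omega
  | succ mm ih =>
      intro p g hp hY ht'
      rw [List.ofFn_succ]
      have h0v : ((0 : Fin (mm+1)) : ℕ) = 0 := rfl
      cases p with
      | zero =>
          have hg0 : g 0 = Y := hY 0 h0v
          by_cases hmm : mm = 0
          · subst hmm
            simp only [List.ofFn_zero]
            show pProd (g 0) [] = padR t (1 - 1 - 0) (padL t 0 Y)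
            simpa [pProd, padR, padL] using hg0
          · rw [F_cons' t _ _ (by simp [List.ofFn_eq_nil_iff]; omega)]
            have hg' : (fun i : Fin mm => g i.succ) = (fun _ : Fin mm => t) := by
              funext i
              exact ht' i.succ (by simp [Fin.val_succ])
            rw [hg0, hg', F_allt t mm (by omega), mul_padR_self]
            have h1 : mm - 1 + 1 = mm := by omega
            have h2 : mm + 1 - 1 - 0 = mm := by omega
            rw [h1, h2]
            rfl
      | succ pp =>
          have hg0 : g 0 = t := ht' 0 (by simp only [Fin.val_zero]; omega)
          have hmm : mm ≠ 0 := by omega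
          rw [F_cons' t _ _ (by simp [List.ofFn_eq_nil_iff]; omega)]
          have hrec := ih pp (fun i : Fin mm => g i.succ) (by omega)
            (fun j hj => hY j.succ (by simp only [Fin.val_succ]; omega))
            (fun j hj => ht' j.succ (by simp only [Fin.val_succ]; omega))
          rw [hg0, hrec, mul_padR]
          have h1 : mm + 1 - 1 - (pp + 1) = mm - 1 - pp := by omega
          rw [h1]
          rfl

lemma F_two (t X Y : S) : ∀ (m p p' : ℕ) (g : Fin m → S), p < p' → p' < m →
    (∀ j : Fin m, (j : ℕ) = p → g j = X) →
    (∀ j : Fin m, (j : ℕ) = p' → g j = Y) →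
    (∀ j : Fin m, (j : ℕ) ≠ p → (j : ℕ) ≠ p' → g j = t) →
    F t (List.ofFn g) = padR t (m - 1 - p') (padL t p (X * padL t (p' - p - 1) Y)) := by
  intro m
  induction m with
  | zero => intro p p' g hpp hp'; omega
  | succ mm ih =>
      intro p p' g hpp hp' hX hY ht'
      rw [List.ofFn_succ]
      have hmm : mm ≠ 0 := by omega
      cases p with
      | zero =>
          have hg0 : g 0 = X := hX 0 rfl
          rw [F_cons' t _ _ (by simp [List.ofFn_eq_nil_iff]; omega)]
          have hrec := F_one t Y mm (p' - 1) (fun i : Fin mm => g i.succ) (by omega)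
            (fun j hj => hY j.succ (by simp only [Fin.val_succ]; omega))
            (fun j hj => ht' j.succ (by simp only [Fin.val_succ]; omega)
              (by simp only [Fin.val_succ]; omega))
          rw [hg0, hrec, mul_padR]
          have h1 : mm + 1 - 1 - p' = mm - 1 - (p' - 1) := by omega
          have h2 : p' - 0 - 1 = p' - 1 := by omega
          rw [h1, h2]
          rfl
      | succ pp =>
          have hg0 : g 0 = t := ht' 0 (by simp only [Fin.val_zero]; omega)
            (by simp only [Fin.val_zero]; omega)
          rw [F_cons' t _ _ (by simp [List.ofFn_eq_nil_iff]; omega)]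
          have hrec := ih pp (p' - 1) (fun i : Fin mm => g i.succ) (by omega) (by omega)
            (fun j hj => hX j.succ (by simp only [Fin.val_succ]; omega))
            (fun j hj => hY j.succ (by simp only [Fin.val_succ]; omega))
            (fun j hj1 hj2 => ht' j.succ (by simp only [Fin.val_succ]; omega)
              (by simp only [Fin.val_succ]; omega))
          rw [hg0, hrec, mul_padR]
          have h1 : mm + 1 - 1 - p' = mm - 1 - (p' - 1) := by omega
          have h2 : p' - 1 - pp - 1 = p' - (pp + 1) - 1 := by omega
          rw [h1, h2]
          rfl

lemma bridge (m : ℕ) (f : Fin m → S) (t : S) (h0 : 0 < m) :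
    pProd (f ⟨0, h0⟩) (List.ofFn f).tail = F t (List.ofFn f) := by
  cases m with
  | zero => omega
  | succ mm =>
      rw [List.ofFn_succ]
      simp only [List.tail_cons]
      have h : (⟨0, h0⟩ : Fin (mm+1)) = 0 := rfl
      rw [h]
      rfl

lemma exists_descent (n : ℕ) (σ : Equiv.Perm (Fin n)) (hσ : σ ≠ 1) :
    ∃ (i : ℕ) (h : i + 1 < n),
      ((σ⁻¹ ⟨i+1, h⟩ : Fin n) : ℕ) < ((σ⁻¹ ⟨i, by omega⟩ : Fin n) : ℕ) := by
  by_contra hc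
  push_neg at hc
  have mono : ∀ (j : ℕ) (hj : j < n) (i : ℕ) (hi : i ≤ j),
      ((σ⁻¹ ⟨i, by omega⟩ : Fin n) : ℕ) ≤ ((σ⁻¹ ⟨j, hj⟩ : Fin n) : ℕ) := by
    intro j
    induction j with
    | zero =>
        intro hj i hi
        have : i = 0 := by omega
        subst this
        exact le_refl _
    | succ jj ihj =>
        intro hj i hi
        rcases Nat.lt_or_ge i (jj + 1) with h | h
        · exact le_trans (ihj (by omega) i (by omega)) (hc jj hj)
        · have : i = jj + 1 := by omega
          subst this
          exact le_refl _
  have smono : ∀ (i j : ℕ) (hi : i < n) (hj : j < n), i < j →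
      ((σ⁻¹ ⟨i, hi⟩ : Fin n) : ℕ) < ((σ⁻¹ ⟨j, hj⟩ : Fin n) : ℕ) := by
    intro i j hi hj hij
    have hle : ((σ⁻¹ ⟨i, hi⟩ : Fin n) : ℕ) ≤ ((σ⁻¹ ⟨j, hj⟩ : Fin n) : ℕ) :=
      mono j hj i (by omega)
    have hne : ((σ⁻¹ ⟨i, hi⟩ : Fin n) : ℕ) ≠ ((σ⁻¹ ⟨j, hj⟩ : Fin n) : ℕ) := by
      intro hcon
      have h1 : (σ⁻¹ ⟨i, hi⟩ : Fin n) = σ⁻¹ ⟨j, hj⟩ := Fin.ext hcon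
      have h2 : (⟨i, hi⟩ : Fin n) = ⟨j, hj⟩ := σ⁻¹.injective h1
      have := Fin.mk.injEq i hi j hj ▸ h2
      omega
    omega
  have lb : ∀ (i : ℕ) (hi : i < n), i ≤ ((σ⁻¹ ⟨i, hi⟩ : Fin n) : ℕ) := by
    intro i
    induction i with
    | zero => intro hi; omega
    | succ ii ihi =>
        intro hi
        have h1 := ihi (by omega)
        have h2 := smono ii (ii+1) (by omega) hi (by omega)
        omega
  have fixval : ∀ (j : ℕ) (hj : j < n), σ ⟨j, hj⟩ = ⟨j, hj⟩ := by
    intro j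
    induction j using Nat.strong_induction_on with
    | _ j ihs =>
        intro hj
        have hk : ((σ ⟨j, hj⟩ : Fin n) : ℕ) ≤ j := by
          have h1 := lb ((σ ⟨j, hj⟩ : Fin n) : ℕ) (Fin.isLt _)
          have h2 : (σ⁻¹ ⟨((σ ⟨j, hj⟩ : Fin n) : ℕ), Fin.isLt _⟩ : Fin n) = ⟨j, hj⟩ := by
            have h3 : (⟨((σ ⟨j, hj⟩ : Fin n) : ℕ), Fin.isLt _⟩ : Fin n) = σ ⟨j, hj⟩ := rfl
            rw [h3]
            exact σ.symm_apply_apply _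
          rw [h2] at h1
          exact h1
        rcases Nat.lt_or_ge ((σ ⟨j, hj⟩ : Fin n) : ℕ) j with hlt | hge
        · exfalso
          have hkn : ((σ ⟨j, hj⟩ : Fin n) : ℕ) < n := lt_trans hlt hj
          have hfix := ihs _ hlt hkn
          have heq : σ ⟨j, hj⟩ = ⟨((σ ⟨j, hj⟩ : Fin n) : ℕ), hkn⟩ := Fin.ext rfl
          have h4 : (⟨j, hj⟩ : Fin n) = ⟨((σ ⟨j, hj⟩ : Fin n) : ℕ), hkn⟩ :=
            σ.injective (heq.trans hfix.symm)
          have h5 : j = ((σ ⟨j, hj⟩ : Fin n) : ℕ) := congrArg Fin.val h4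
          omega
        · refine Fin.ext ?_
          have hvj : ((⟨j, hj⟩ : Fin n) : ℕ) = j := rfl
          rw [hvj]
          omega
  apply hσ
  apply Equiv.ext
  intro x
  have := fixval (x : ℕ) x.isLt
  simpa using this

lemma key {S : Type*} [Semigroup S] (n : ℕ) (hn : 2 ≤ n) (σ : Equiv.Perm (Fin n))
    (hσ : σ ≠ 1) (hperm : PermIdentity (S := S) n hn σ) (t : S) :
    ∃ a b c e q : ℕ, ∀ X Y : S,
      padR t b (padL t a (X * Y)) = padR t e (padL t c (Y * padL t q X)) := by
  obtain ⟨i0, h1, hd⟩ := exists_descent n σ hσ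
  have hi0 : i0 < n := by omega
  set A : ℕ := ((σ⁻¹ ⟨i0+1, h1⟩ : Fin n) : ℕ) with hA
  set B : ℕ := ((σ⁻¹ ⟨i0, by omega⟩ : Fin n) : ℕ) with hB
  have hAB : A < B := hd
  have hBn : B < n := Fin.isLt _
  refine ⟨i0, n - 1 - (i0+1), A, n - 1 - B, B - A - 1, ?_⟩
  intro X Y
  set f : Fin n → S :=
    fun j => if (j : ℕ) = i0 then X else if (j : ℕ) = i0 + 1 then Y else t with hf
  have h0 : 0 < n := by omega
  have hiq : F t (List.ofFn f) = F t (List.ofFn (f ∘ σ)) :=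
    (bridge n f t h0).symm.trans ((hperm f).trans (bridge n (f ∘ σ) t h0))
  have hLft : F t (List.ofFn f)
      = padR t (n - 1 - (i0+1)) (padL t i0 (X * padL t ((i0+1) - i0 - 1) Y)) := by
    apply F_two t X Y n i0 (i0+1) f (by omega) h1
    · intro j hj
      simp only [hf]
      rw [if_pos hj]
    · intro j hj
      simp only [hf]
      rw [if_neg (by omega), if_pos hj]
    · intro j hj1 hj2
      simp only [hf]
      rw [if_neg hj1, if_neg hj2]
  have hRgt : F t (List.ofFn (f ∘ σ))
      = padR t (n - 1 - B) (padL t A (Y * padL t (B - A - 1) X)) := by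
    apply F_two t Y X n A B (f ∘ σ) hAB hBn
    · intro j hj
      have hje : j = σ⁻¹ ⟨i0+1, h1⟩ := Fin.ext hj
      show f (σ j) = Y
      rw [hje, ← Equiv.Perm.mul_apply, mul_inv_cancel, Equiv.Perm.one_apply]
      simp only [hf]
      simp [show i0 + 1 ≠ i0 from by omega]
    · intro j hj
      have hje : j = σ⁻¹ ⟨i0, hi0⟩ := Fin.ext hj
      show f (σ j) = X
      rw [hje, ← Equiv.Perm.mul_apply, mul_inv_cancel, Equiv.Perm.one_apply]
      simp only [hf]
      simp
    · intro j hj1 hj2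
      show f (σ j) = t
      have hn1 : ((σ j : Fin n) : ℕ) ≠ i0 := by
        intro hcon
        have h2 : σ j = ⟨i0, hi0⟩ := Fin.ext hcon
        have h3 : j = σ⁻¹ ⟨i0, hi0⟩ := by
          rw [← h2, ← Equiv.Perm.mul_apply, inv_mul_cancel, Equiv.Perm.one_apply]
        apply hj2
        rw [h3]
      have hn2 : ((σ j : Fin n) : ℕ) ≠ i0 + 1 := by
        intro hcon
        have h2 : σ j = ⟨i0+1, h1⟩ := Fin.ext hcon
        have h3 : j = σ⁻¹ ⟨i0+1, h1⟩ := by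
          rw [← h2, ← Equiv.Perm.mul_apply, inv_mul_cancel, Equiv.Perm.one_apply]
        apply hj1
        rw [h3]
      simp only [hf]
      rw [if_neg hn1, if_neg hn2]
  have hz : (i0+1) - i0 - 1 = 0 := by omega
  rw [hz] at hLft
  have hz2 : padL t 0 Y = Y := rfl
  rw [hz2] at hLft
  exact hLft.symm.trans (hiq.trans hRgt)

end PermSepAux

theorem permutative_subset_medial {S : Type*} [Semigroup S]
    (n : ℕ) (hn : 2 ≤ n) (σ : Equiv.Perm (Fin n)) (hσ : σ ≠ 1)
    (hperm : PermIdentity (S := S) n hn σ)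
    (X : Set S) (hX : X.Nonempty) (hsep : (Separator X).Nonempty) :
    ∀ u x y v : S, u * x * y * v ∈ X ↔ u * y * x * v ∈ X := by
  open PermSepAux in
  obtain ⟨t, ht1, ht2, ht3, ht4⟩ := hsep
  obtain ⟨a, b, c, e, q, D⟩ := PermSepAux.key n hn σ hσ hperm t
  intro u x y v
  have memt : ∀ w : S, t * w ∈ X ↔ w ∈ X := fun w =>
    ⟨fun h => Classical.byContradiction fun hw => ht3 w hw h, fun h => ht1 w h⟩
  have memtr : ∀ w : S, w * t ∈ X ↔ w ∈ X := fun w =>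
    ⟨fun h => Classical.byContradiction fun hw => ht4 w hw h, fun h => ht2 w h⟩
  have memL : ∀ (k : ℕ) (w : S), PermSepAux.padL t k w ∈ X ↔ w ∈ X := by
    intro k
    induction k with
    | zero => exact fun w => Iff.rfl
    | succ kk ih => exact fun w => (memt _).trans (ih w)
  have memR : ∀ (k : ℕ) (w : S), PermSepAux.padR t k w ∈ X ↔ w ∈ X := by
    intro k
    induction k with
    | zero => exact fun w => Iff.rfl
    | succ kk ih => exact fun w => (memtr _).trans (ih w)
  have mc : ∀ {w w' : S}, w = w' → (w ∈ X ↔ w' ∈ X) := fun h => by rw [h]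
  -- rotation move
  have rot : ∀ (s : ℕ) (U V : S),
      (U * V ∈ X ↔ V * PermSepAux.padL t (q + s) U ∈ X) := by
    intro s U V
    have c1 : (U * V ∈ X) ↔ PermSepAux.padL t s U * V ∈ X := by
      rw [PermSepAux.padL_mul]
      exact (memL s _).symm
    have c2 : (PermSepAux.padL t s U * V ∈ X) ↔
        PermSepAux.padR t b (PermSepAux.padL t a (PermSepAux.padL t s U * V)) ∈ X :=
      ((memR b _).trans (memL a _)).symm
    have c3 := mc (D (PermSepAux.padL t s U) V)
    have c4 : (PermSepAux.padR t e (PermSepAux.padL t c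
        (V * PermSepAux.padL t q (PermSepAux.padL t s U))) ∈ X) ↔
        V * PermSepAux.padL t (q + s) U ∈ X := by
      rw [PermSepAux.padL_add]
      exact (memR e _).trans (memL c _)
    exact c1.trans (c2.trans (c3.trans c4))
  -- reverse-descent move
  have revd : ∀ (xx yy h : S),
      (xx * PermSepAux.padL t q (yy * PermSepAux.padL t e h) ∈ X) ↔
      (yy * (xx * PermSepAux.padL t b h) ∈ X) := by
    intro xx yy h
    have hD := congrArg (fun z => z * h) (D yy xx)
    rw [PermSepAux.padR_mul, PermSepAux.padR_mul, PermSepAux.padL_mul,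
      PermSepAux.padL_mul] at hD
    rw [mul_assoc yy xx (PermSepAux.padL t b h)] at hD
    rw [mul_assoc xx (PermSepAux.padL t q yy) (PermSepAux.padL t e h)] at hD
    rw [PermSepAux.padL_mul t q yy (PermSepAux.padL t e h)] at hD
    -- hD : padL a (yy * (xx * padL b h)) = padL c (xx * padL q (yy * padL e h))
    exact ((memL c _).symm.trans (mc hD.symm)).trans (memL a _)
  -- chain A
  have A1 : u*x*y*v ∈ X ↔ (y*v) * PermSepAux.padL t q (u*x) ∈ X := by
    have h0 := rot 0 (u*x) (y*v)
    rw [Nat.add_zero] at h0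
    exact (mc (mul_assoc (u*x) y v)).trans h0
  have A2 : (y*v) * PermSepAux.padL t q (u*x) ∈ X ↔
      (v * PermSepAux.padL t q (u*x)) * PermSepAux.padL t q y ∈ X := by
    have h0 := rot 0 y (v * PermSepAux.padL t q (u*x))
    rw [Nat.add_zero] at h0
    exact (mc (mul_assoc y v (PermSepAux.padL t q (u*x)))).trans h0
  have A3 : (v * PermSepAux.padL t q (u*x)) * PermSepAux.padL t q y ∈ X ↔
      (x * PermSepAux.padL t q y) *
        PermSepAux.padL t (e + q) (v * PermSepAux.padL t q u) ∈ X := by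
    have h0 := rot e (v * PermSepAux.padL t q u) (x * PermSepAux.padL t q y)
    rw [Nat.add_comm q e] at h0
    refine (mc ?_).trans h0
    rw [← PermSepAux.padL_mul t q u x]
    rw [← mul_assoc v (PermSepAux.padL t q u) x]
    rw [mul_assoc (v * PermSepAux.padL t q u) x (PermSepAux.padL t q y)]
  have A4 : (x * PermSepAux.padL t q y) *
        PermSepAux.padL t (e + q) (v * PermSepAux.padL t q u) ∈ X ↔
      y * (x * PermSepAux.padL t b
        (PermSepAux.padL t q (v * PermSepAux.padL t q u))) ∈ X := by
    have h0 := revd x y (PermSepAux.padL t q (v * PermSepAux.padL t q u))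
    refine (mc ?_).trans h0
    rw [mul_assoc x (PermSepAux.padL t q y) _]
    rw [PermSepAux.padL_mul t q y _]
    rw [PermSepAux.padL_add t e q (v * PermSepAux.padL t q u)]
  have A5 : y * (x * PermSepAux.padL t b
        (PermSepAux.padL t q (v * PermSepAux.padL t q u))) ∈ X ↔
      u * PermSepAux.padL t q
        (y * (x * PermSepAux.padL t (b+q) (PermSepAux.padR t q v))) ∈ X := by
    have h0 := rot 0 (y * (x * PermSepAux.padL t (b+q) (PermSepAux.padR t q v))) u
    rw [Nat.add_zero] at h0
    refine (mc ?_).trans h0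
    rw [PermSepAux.padL_add t b q (v * PermSepAux.padL t q u)]
    rw [← PermSepAux.padR_mul t q v u]
    rw [← PermSepAux.padL_mul t (b+q) (PermSepAux.padR t q v) u]
    rw [← mul_assoc x (PermSepAux.padL t (b+q) (PermSepAux.padR t q v)) u]
    rw [← mul_assoc y (x * PermSepAux.padL t (b+q) (PermSepAux.padR t q v)) u]
  have A6 : u * PermSepAux.padL t q
        (y * (x * PermSepAux.padL t (b+q) (PermSepAux.padR t q v))) ∈ X ↔
      u * PermSepAux.padL t q (y * (x * PermSepAux.padL t (b+q) v)) ∈ X := by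
    have h1 : u * PermSepAux.padL t q
        (y * (x * PermSepAux.padL t (b+q) (PermSepAux.padR t q v)))
        = PermSepAux.padR t q
            (u * PermSepAux.padL t q (y * (x * PermSepAux.padL t (b+q) v))) := by
      rw [PermSepAux.padL_padR t (b+q) q v]
      rw [PermSepAux.mul_padR t q x _]
      rw [PermSepAux.mul_padR t q y _]
      rw [PermSepAux.padL_padR t q q _]
      rw [PermSepAux.mul_padR t q u _]
    exact (mc h1).trans (memR q _)
  -- chain B
  have B1 : u*y*x*v ∈ X ↔ (y*(x*v)) * PermSepAux.padL t q u ∈ X := by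
    have h0 := rot 0 u (y*(x*v))
    rw [Nat.add_zero] at h0
    refine (mc ?_).trans h0
    rw [mul_assoc (u*y) x v, mul_assoc u y (x*v)]
  have B2 : (y*(x*v)) * PermSepAux.padL t q u ∈ X ↔
      u * PermSepAux.padL t q (y*(x*v)) ∈ X := by
    have h0 := rot 0 (PermSepAux.padR t q (y*(x*v))) u
    rw [Nat.add_zero] at h0
    have h1 : (y*(x*v)) * PermSepAux.padL t q u
        = PermSepAux.padR t q (y*(x*v)) * u :=
      (PermSepAux.padR_mul t q (y*(x*v)) u).symm
    have h2 : u * PermSepAux.padL t q (PermSepAux.padR t q (y*(x*v)))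
        = PermSepAux.padR t q (u * PermSepAux.padL t q (y*(x*v))) := by
      rw [PermSepAux.padL_padR, PermSepAux.mul_padR]
    exact (mc h1).trans (h0.trans ((mc h2).trans (memR q _)))
  have B3 : u * PermSepAux.padL t q (y*(x*v)) ∈ X ↔
      v * PermSepAux.padL t q (u * PermSepAux.padL t q (y*x)) ∈ X := by
    have h0 := rot 0 (u * PermSepAux.padL t q (y*x)) v
    rw [Nat.add_zero] at h0
    refine (mc ?_).trans h0
    rw [← mul_assoc y x v]
    rw [← PermSepAux.padL_mul t q (y*x) v]
    rw [← mul_assoc u (PermSepAux.padL t q (y*x)) v]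
  have B4 : v * PermSepAux.padL t q (u * PermSepAux.padL t q (y*x)) ∈ X ↔
      u * PermSepAux.padL t q (y * (x * PermSepAux.padL t (b+q) v)) ∈ X := by
    have h0 := rot b v (PermSepAux.padL t q (u * PermSepAux.padL t q (y*x)))
    have h1 : PermSepAux.padL t q (u * PermSepAux.padL t q (y*x)) *
          PermSepAux.padL t (q+b) v
        = PermSepAux.padL t q
            (u * PermSepAux.padL t q (y * (x * PermSepAux.padL t (b+q) v))) := by
      rw [PermSepAux.padL_mul t q (u * PermSepAux.padL t q (y*x)) _]
      rw [mul_assoc u (PermSepAux.padL t q (y*x)) _]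
      rw [PermSepAux.padL_mul t q (y*x) _]
      rw [mul_assoc y x _]
      rw [Nat.add_comm q b]
    exact h0.trans ((mc h1).trans (memL q _))
  exact A1.trans (A2.trans (A3.trans (A4.trans (A5.trans (A6.trans
    ((B1.trans (B2.trans (B3.trans B4))).symm))))))
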